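/- arXiv:2209.12519 — 8 statements merged into one kernel-verified Lean document; each statement's English description precedes it below -/
import Mathlib

section
/- Let n ≥ 1, let x_1,…,x_n be positive reals with Σ_{i=1}^n x_i = 1, and let α, β, γ > 0. Define vectors v_0, v_1, …, v_n ∈ ℝ^{2n} by: v_0(j) = γ·√(x_j) for j ∈ {1,…,n} and v_0(j) = 0 for j ∈ {n+1,…,2n}; and for each i ∈ {1,…,n}, v_i(i) = √(α·e^{x_i}), v_i(i+n) = √(β·e^{x_i}), and all other coordinates of v_i are 0. Let A be the (n+1)×(n+1) Gram matrix A_{i,j} = ⟨v_i, v_j⟩ with indices in {0,…,n}. Then A_{i,j} = 0 for all distinct i,j ∈ {1,…,n} (A is an arrowhead matrix), and for every subset S ⊆ {0,…,n}: if 0 ∈ S, then det(A_S) = (α+β)^{|S|−1} · γ² · exp(Σ_{i∈S\{0}} x_i) · (1 − (α/(α+β))·Σ_{i∈S\{0}} x_i); and if 0 ∉ S, then det(A_S) = (α+β)^{|S|} · exp(Σ_{i∈S} x_i). -/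
noncomputable def principalDet {ι : Type*} [DecidableEq ι] (A : Matrix ι ι ℝ) (S : Finset ι) : ℝ :=
  (A.submatrix (fun i : S => (i : ι)) (fun j : S => (j : ι))).det

open Finset

@[to_additive]
lemma prod_erase_subtype {ι : Type*} [DecidableEq ι] {M : Type*} [CommMonoid M]
    (S : Finset ι) (z : ι) (hz : z ∈ S) (f : ι → M) :
    ∏ i ∈ (Finset.univ : Finset S).erase ⟨z, hz⟩, f i.val = ∏ i ∈ S.erase z, f i := by
  refine Finset.prod_bij (fun a _ => a.val) ?_ ?_ ?_ ?_
  · rintro ⟨a, haS⟩ ha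
    simp only [Finset.mem_erase, Finset.mem_univ, and_true] at ha
    exact Finset.mem_erase.2 ⟨fun h => ha (Subtype.ext h), haS⟩
  · intro a₁ _ a₂ _ h; exact Subtype.ext h
  · intro b hb
    rcases Finset.mem_erase.1 hb with ⟨hb0, hbS⟩
    exact ⟨⟨b, hbS⟩, by simp [Subtype.ext_iff, hb0], rfl⟩
  · intros; rfl

lemma det_arrowhead {ι : Type*} [Fintype ι] [DecidableEq ι] (M : Matrix ι ι ℝ) (z : ι)
    (hoff : ∀ i j, i ≠ z → j ≠ z → i ≠ j → M i j = 0)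
    (hdiag : ∀ i, i ≠ z → M i i ≠ 0) :
    M.det = (∏ i ∈ Finset.univ.erase z, M i i) *
      (M z z - ∑ i ∈ Finset.univ.erase z, M z i * M i z / M i i) := by
  classical
  set κ := {i : ι // i ≠ z}
  let e : Unit ⊕ κ ≃ ι :=
    { toFun := Sum.elim (fun _ => z) (fun i => i.val)
      invFun := fun i => if h : i = z then Sum.inl () else Sum.inr ⟨i, h⟩
      left_inv := by
        rintro (u | ⟨i, hi⟩)
        · simp
        · simp [hi]
      right_inv := by intro i; by_cases h : i = z <;> simp [h] }
  have hM : M.submatrix e e = Matrix.fromBlocks (Matrix.of fun _ _ : Unit => M z z)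
      (Matrix.of fun (_ : Unit) (j : κ) => M z j.val)
      (Matrix.of fun (i : κ) (_ : Unit) => M i.val z)
      (Matrix.diagonal fun i : κ => M i.val i.val) := by
    ext i j
    rcases i with i | i <;> rcases j with j | j <;>
      simp only [Matrix.submatrix_apply, Matrix.fromBlocks, Matrix.of_apply, Sum.elim_inl,
        Sum.elim_inr, e, Equiv.coe_fn_mk, Matrix.diagonal]
    by_cases h : i = j
    · subst h; simp
    · simp only [h, if_neg]
      exact hoff i.val j.val i.prop j.prop (fun hh => h (Subtype.ext hh))
  haveI hv : Invertible (fun i : κ => M i.val i.val) :=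
    { invOf := fun i => (M i.val i.val)⁻¹
      invOf_mul_self := by funext i; exact inv_mul_cancel₀ (hdiag i.val i.prop)
      mul_invOf_self := by funext i; exact mul_inv_cancel₀ (hdiag i.val i.prop) }
  haveI : Invertible (Matrix.diagonal fun i : κ => M i.val i.val) :=
    Matrix.diagonalInvertible _
  have key : M.det = (Matrix.submatrix M e e).det := (Matrix.det_submatrix_equiv_self e M).symm
  rw [key, hM, Matrix.det_fromBlocks₂₂, Matrix.det_diagonal]
  have hinv : (⅟ (Matrix.diagonal fun i : κ => M i.val i.val)) =
      Matrix.diagonal fun i : κ => (M i.val i.val)⁻¹ := by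
    have h2 : ⅟(fun i : κ => M i.val i.val) = fun i => (M i.val i.val)⁻¹ :=
      invOf_eq_right_inv (by funext i; exact mul_inv_cancel₀ (hdiag i.val i.prop))
    rw [Matrix.invOf_diagonal_eq, h2]
  rw [hinv]
  have hdet1 : (Matrix.of (fun _ _ : Unit => M z z) -
      Matrix.of (fun (_ : Unit) (j : κ) => M z j.val) *
        Matrix.diagonal (fun i : κ => (M i.val i.val)⁻¹) *
        Matrix.of (fun (i : κ) (_ : Unit) => M i.val z)).det
      = M z z - ∑ i : κ, M z i.val * M i.val z / M i.val i.val := by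
    rw [Matrix.det_unique]
    simp [Matrix.mul_apply, Matrix.sub_apply, Matrix.diagonal, Finset.mul_sum, Finset.sum_mul,
      div_eq_mul_inv]
    exact Finset.sum_congr rfl fun i _ => by rw [Finset.sum_ite_eq', if_pos (Finset.mem_univ _)]; ring
  rw [hdet1]
  have h1 : ∏ i : κ, M i.val i.val = ∏ i ∈ Finset.univ.erase z, M i i :=
    (Finset.prod_subtype (Finset.univ.erase z) (fun x => by simp) (fun i => M i i)).symm
  have h2 : ∑ i : κ, M z i.val * M i.val z / M i.val i.val
      = ∑ i ∈ Finset.univ.erase z, M z i * M i z / M i i :=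
    (Finset.sum_subtype (Finset.univ.erase z) (fun x => by simp) (fun i => M z i * M i z / M i i)).symm
  rw [h1, h2]

theorem stmt_1 (n : ℕ) (hn : 1 ≤ n) (x : Fin (n + 1) → ℝ)
    (hx : ∀ i : Fin (n + 1), i ≠ 0 → 0 < x i)
    (hsum : ∑ i ∈ Finset.univ.erase (0 : Fin (n + 1)), x i = 1)
    (α β γ : ℝ) (hα : 0 < α) (hβ : 0 < β) (hγ : 0 < γ)
    (v : Fin (n + 1) → ({i : Fin (n + 1) // i ≠ 0} ⊕ {i : Fin (n + 1) // i ≠ 0}) → ℝ)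
    (hv0l : ∀ j : {i : Fin (n + 1) // i ≠ 0}, v 0 (Sum.inl j) = γ * Real.sqrt (x j))
    (hv0r : ∀ j : {i : Fin (n + 1) // i ≠ 0}, v 0 (Sum.inr j) = 0)
    (hvl : ∀ i : Fin (n + 1), i ≠ 0 → ∀ j : {i : Fin (n + 1) // i ≠ 0},
      v i (Sum.inl j) = if (j : Fin (n + 1)) = i then Real.sqrt (α * Real.exp (x i)) else 0)
    (hvr : ∀ i : Fin (n + 1), i ≠ 0 → ∀ j : {i : Fin (n + 1) // i ≠ 0},
      v i (Sum.inr j) = if (j : Fin (n + 1)) = i then Real.sqrt (β * Real.exp (x i)) else 0)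
    (A : Matrix (Fin (n + 1)) (Fin (n + 1)) ℝ)
    (hA : ∀ i j, A i j = ∑ e, v i e * v j e) :
    (∀ i j : Fin (n + 1), i ≠ 0 → j ≠ 0 → i ≠ j → A i j = 0) ∧
    ∀ S : Finset (Fin (n + 1)),
      (0 ∈ S → principalDet A S =
        (α + β) ^ (S.card - 1) * γ ^ 2 * Real.exp (∑ i ∈ S.erase 0, x i) *
          (1 - α / (α + β) * ∑ i ∈ S.erase 0, x i)) ∧
      (0 ∉ S → principalDet A S = (α + β) ^ S.card * Real.exp (∑ i ∈ S, x i)) := by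
  have hαβ : α + β ≠ 0 := by positivity
  -- off-diagonal zero
  have hAoff : ∀ i j : Fin (n + 1), i ≠ 0 → j ≠ 0 → i ≠ j → A i j = 0 := by
    intro i j hi hj hij
    rw [hA, Fintype.sum_sum_type]
    rw [Finset.sum_eq_zero, Finset.sum_eq_zero, add_zero]
    · intro k _
      rw [hvr i hi, hvr j hj]
      split_ifs with h1 h2 h2
      · exact absurd (h1.symm.trans h2) hij
      · exact mul_zero _
      · exact zero_mul _
      · exact zero_mul _
    · intro k _
      rw [hvl i hi, hvl j hj]
      split_ifs with h1 h2 h2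
      · exact absurd (h1.symm.trans h2) hij
      · exact mul_zero _
      · exact zero_mul _
      · exact zero_mul _
  -- diagonal entries
  have hAdiag : ∀ i : Fin (n + 1), i ≠ 0 → A i i = (α + β) * Real.exp (x i) := by
    intro i hi
    rw [hA, Fintype.sum_sum_type]
    have h1 : ∀ k : {i : Fin (n + 1) // i ≠ 0},
        v i (Sum.inl k) * v i (Sum.inl k)
          = if k = ⟨i, hi⟩ then α * Real.exp (x i) else 0 := by
      intro k
      rw [hvl i hi]
      by_cases h : (k : Fin (n + 1)) = i
      · rw [if_pos h, if_pos (Subtype.ext h), Real.mul_self_sqrt (by positivity)]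
      · rw [if_neg h, if_neg (fun hh => h (congrArg Subtype.val hh)), mul_zero]
    have h2 : ∀ k : {i : Fin (n + 1) // i ≠ 0},
        v i (Sum.inr k) * v i (Sum.inr k)
          = if k = ⟨i, hi⟩ then β * Real.exp (x i) else 0 := by
      intro k
      rw [hvr i hi]
      by_cases h : (k : Fin (n + 1)) = i
      · rw [if_pos h, if_pos (Subtype.ext h), Real.mul_self_sqrt (by positivity)]
      · rw [if_neg h, if_neg (fun hh => h (congrArg Subtype.val hh)), mul_zero]
    rw [Finset.sum_congr rfl fun k _ => h1 k, Finset.sum_congr rfl fun k _ => h2 k,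
      Finset.sum_ite_eq' _ _ _, Finset.sum_ite_eq' _ _ _,
      if_pos (Finset.mem_univ _), if_pos (Finset.mem_univ _)]
    ring
  -- A 0 0
  have hA00 : A 0 0 = γ ^ 2 := by
    rw [hA, Fintype.sum_sum_type]
    have h2 : ∑ k : {i : Fin (n + 1) // i ≠ 0}, v 0 (Sum.inr k) * v 0 (Sum.inr k) = 0 := by
      apply Finset.sum_eq_zero; intro k _; rw [hv0r, zero_mul]
    have h1 : ∀ k : {i : Fin (n + 1) // i ≠ 0},
        v 0 (Sum.inl k) * v 0 (Sum.inl k) = γ ^ 2 * x k.val := by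
      intro k
      rw [hv0l, show γ * Real.sqrt (x k.val) * (γ * Real.sqrt (x k.val))
        = γ ^ 2 * (Real.sqrt (x k.val) * Real.sqrt (x k.val)) from by ring,
        Real.mul_self_sqrt (hx k.val k.prop).le]
    rw [Finset.sum_congr rfl fun k _ => h1 k, h2, add_zero, ← Finset.mul_sum,
      ← Finset.sum_subtype (Finset.univ.erase 0) (fun i => by simp) x, hsum, mul_one]
  -- A 0 i
  have hA0i : ∀ i : Fin (n + 1), i ≠ 0 →
      A 0 i = γ * Real.sqrt (x i) * Real.sqrt (α * Real.exp (x i)) := by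
    intro i hi
    rw [hA, Fintype.sum_sum_type]
    have h2 : ∑ k : {i : Fin (n + 1) // i ≠ 0}, v 0 (Sum.inr k) * v i (Sum.inr k) = 0 := by
      apply Finset.sum_eq_zero; intro k _; rw [hv0r, zero_mul]
    have h1 : ∀ k : {i : Fin (n + 1) // i ≠ 0},
        v 0 (Sum.inl k) * v i (Sum.inl k) =
          if k = ⟨i, hi⟩ then γ * Real.sqrt (x i) * Real.sqrt (α * Real.exp (x i)) else 0 := by
      intro k
      rw [hv0l, hvl i hi]
      by_cases h : (k : Fin (n + 1)) = i
      · rw [if_pos h, if_pos (Subtype.ext h), h]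
      · rw [if_neg h, if_neg (fun hh => h (congrArg Subtype.val hh)), mul_zero]
    rw [Finset.sum_congr rfl fun k _ => h1 k, h2, add_zero, Finset.sum_ite_eq' _ _ _,
      if_pos (Finset.mem_univ _)]
  have hsymm : ∀ i j, A i j = A j i := by
    intro i j; rw [hA, hA]; exact Finset.sum_congr rfl fun e _ => mul_comm _ _
  refine ⟨hAoff, fun S => ⟨?_, ?_⟩⟩
  · -- 0 ∈ S
    intro h0
    rw [principalDet]
    rw [det_arrowhead (A.submatrix (fun i : S => (i : Fin (n+1))) (fun j : S => (j : Fin (n+1))))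
      (⟨0, h0⟩ : S) ?_ ?_]
    · simp only [Matrix.submatrix_apply]
      rw [prod_erase_subtype S 0 h0 (fun a => A a a),
        sum_erase_subtype S 0 h0 (fun a => A 0 a * A a 0 / A a a), hA00]
      have hprod : ∏ i ∈ S.erase 0, A i i
          = (α + β) ^ (S.card - 1) * Real.exp (∑ i ∈ S.erase 0, x i) := by
        rw [Finset.prod_congr rfl (fun i hi => hAdiag i (Finset.mem_erase.1 hi).1),
          Finset.prod_mul_distrib, Finset.prod_const, Real.exp_sum,
          Finset.card_erase_of_mem h0]
      have hsum' : ∑ i ∈ S.erase 0, A 0 i * A i 0 / A i i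
          = γ ^ 2 * (α / (α + β)) * ∑ i ∈ S.erase 0, x i := by
        rw [Finset.mul_sum]
        apply Finset.sum_congr rfl
        intro i hi
        have hi0 := (Finset.mem_erase.1 hi).1
        rw [← hsymm 0 i, hA0i i hi0, hAdiag i hi0]
        have he : Real.exp (x i) ≠ 0 := Real.exp_ne_zero _
        rw [show γ * Real.sqrt (x i) * Real.sqrt (α * Real.exp (x i)) *
            (γ * Real.sqrt (x i) * Real.sqrt (α * Real.exp (x i)))
          = γ ^ 2 * (Real.sqrt (x i) * Real.sqrt (x i)) *
            (Real.sqrt (α * Real.exp (x i)) * Real.sqrt (α * Real.exp (x i))) from by ring,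
          Real.mul_self_sqrt (hx i hi0).le, Real.mul_self_sqrt (by positivity)]
        field_simp
      rw [hprod, hsum']
      ring
    · intro i j hi hj hij
      simp only [Matrix.submatrix_apply]
      refine hAoff i.val j.val ?_ ?_ (fun hh => hij (Subtype.ext hh))
      · exact fun h => hi (Subtype.ext h)
      · exact fun h => hj (Subtype.ext h)
    · intro i hi
      simp only [Matrix.submatrix_apply]
      rw [hAdiag i.val (fun h => hi (Subtype.ext h))]
      positivity
  · -- 0 ∉ S
    intro h0
    have hS0 : ∀ i : Fin (n + 1), i ∈ S → i ≠ 0 := fun i hi h => h0 (h ▸ hi)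
    have hdg : A.submatrix (fun i : S => (i : Fin (n+1))) (fun j : S => (j : Fin (n+1)))
        = Matrix.diagonal fun i : S => A i.val i.val := by
      ext i j
      by_cases h : i = j
      · subst h; simp
      · rw [Matrix.submatrix_apply, Matrix.diagonal_apply_ne _ h]
        exact hAoff i.val j.val (hS0 _ i.prop) (hS0 _ j.prop) (fun hh => h (Subtype.ext hh))
    rw [principalDet, hdg, Matrix.det_diagonal, Finset.prod_coe_sort S (fun i => A i i),
      Finset.prod_congr rfl (fun i hi => hAdiag i (hS0 i hi)),
      Finset.prod_mul_distrib, Finset.prod_const, Real.exp_sum]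
end

section
/- Let n ≥ 1 and k ∈ {1,…,n}. Let x_1,…,x_n ∈ (0,1) be reals with Σ_{i=1}^n x_i = 1, let t ∈ (0,1), and let δ be a real with 0 < δ ≤ 1/2 such that for every subset T ⊆ {1,…,n}, if Σ_{i∈T} x_i ≠ t then |Σ_{i∈T} x_i − t| ≥ δ. Define the real (n+1)×(n+1) matrix A (indices in {0,…,n}) by A_{0,0} = 25, A_{0,i} = A_{i,0} = 5·√(x_i·e^{x_i}) for i ∈ {1,…,n}, A_{i,i} = (1+t)·e^{x_i} for i ∈ {1,…,n}, and A_{i,j} = 0 for all distinct i,j ∈ {1,…,n}. Set OPT = 25·(1+t)^{k−1}·e^t. Then for every subset S ⊆ {0,…,n} with |S| = k+1: if 0 ∈ S and Σ_{i∈S\{0}} x_i = t, then det(A_S) = OPT; otherwise det(A_S) ≤ e^{−δ}(1+δ)·OPT. -/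
open Finset Matrix Real

namespace Real

theorem exp_neg_mul_one_add_le {u v : ℝ} (huv : 0 ≤ (u - v) * v) (hv : -1 ≤ v) :
    exp (-u) * (1 + u) ≤ exp (-v) * (1 + v) :=
  calc exp (-u) * (1 + u) ≤ exp (-u) * ((u - v + 1) * (1 + v)) := by gcongr; nlinarith
    _ ≤ exp (-u) * (exp (u - v) * (1 + v)) := by
      gcongr
      · linarith
      · exact add_one_le_exp _
    _ = exp (-v) * (1 + v) := by rw [← mul_assoc, ← exp_add]; ring_nf

theorem exp_mul_one_sub_le_exp_neg_mul_one_add {δ : ℝ} (h0 : 0 ≤ δ) (h1 : δ < 1) :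
    exp δ * (1 - δ) ≤ exp (-δ) * (1 + δ) := by
  have hlog : 2 * δ ≤ log (1 + δ) - log (1 - δ) := by
    -- the first term of the series `∑ 2 δ^(2k+1) / (2k+1)`, all of whose terms are nonnegative
    have hsum := hasSum_log_sub_log_of_abs_lt_one (abs_lt.mpr ⟨by linarith, h1⟩)
    simpa using le_hasSum hsum 0 fun j _ => by positivity
  have hexp : exp (2 * δ) * (1 - δ) ≤ 1 + δ := by
    rw [← le_div_iff₀ (by linarith)]
    calc exp (2 * δ) ≤ exp (log (1 + δ) - log (1 - δ)) := exp_le_exp.mpr hlog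
      _ = (1 + δ) / (1 - δ) := by rw [exp_sub, exp_log (by linarith), exp_log (by linarith)]
  calc exp δ * (1 - δ) = exp (-δ) * (exp (2 * δ) * (1 - δ)) := by
        rw [← mul_assoc, ← exp_add]; ring_nf
    _ ≤ exp (-δ) * (1 + δ) := by gcongr

theorem exp_neg_mul_one_add_le_of_le_abs {δ u : ℝ} (h0 : 0 ≤ δ) (h1 : δ < 1) (hu : δ ≤ |u|) :
    exp (-u) * (1 + u) ≤ exp (-δ) * (1 + δ) := by
  rcases le_abs'.mp hu with hu | hu
  · calc exp (-u) * (1 + u) ≤ exp (-(-δ)) * (1 + -δ) :=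
          exp_neg_mul_one_add_le (by nlinarith) (by linarith)
      _ ≤ exp (-δ) * (1 + δ) := by
        rw [neg_neg, ← sub_eq_add_neg]; exact exp_mul_one_sub_le_exp_neg_mul_one_add h0 h1
  · exact exp_neg_mul_one_add_le (by nlinarith) (by linarith)

theorem one_sub_sq_le_exp_neg_mul_one_add {δ : ℝ} (hδ : -1 ≤ δ) :
    1 - δ ^ 2 ≤ exp (-δ) * (1 + δ) :=
  calc 1 - δ ^ 2 = (-δ + 1) * (1 + δ) := by ring
    _ ≤ exp (-δ) * (1 + δ) := mul_le_mul_of_nonneg_right (add_one_le_exp _) (by linarith)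

theorem one_add_sq_mul_exp_le {s t δ : ℝ} (hs : s ≤ 1) (ht0 : 0 ≤ t) (ht1 : t ≤ 1)
    (hδ0 : 0 ≤ δ) (hδ : δ ≤ 1 / 2) :
    (1 + t) ^ 2 * exp s ≤ 25 * (exp (-δ) * (1 + δ)) * exp t :=
  calc (1 + t) ^ 2 * exp s ≤ 2 ^ 2 * 2.7182818286 := by
        gcongr
        · linarith
        · exact (exp_le_exp.mpr hs).trans exp_one_lt_d9.le
    _ ≤ 25 * (1 - δ ^ 2) * 1 := by nlinarith
    _ ≤ 25 * (exp (-δ) * (1 + δ)) * exp t := by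
        gcongr
        · exact one_sub_sq_le_exp_neg_mul_one_add (by linarith)
        · exact one_le_exp ht0

end Real

theorem Matrix.det_fromBlocks_diagonal_unit {K ι : Type*} [Field K] [Fintype ι] [DecidableEq ι]
    (d b c : ι → K) (a : K) (hd : ∀ i, d i ≠ 0) :
    (fromBlocks (diagonal d) (of fun i (_ : Unit) => b i) (of fun (_ : Unit) j => c j)
      (of fun _ _ => a)).det = (∏ i, d i) * (a - ∑ i, c i * b i / d i) := by
  let : Invertible (diagonal d) := ⟨diagonal d⁻¹, by simp [hd], by simp [hd]⟩
  rw [det_fromBlocks₁₁, det_diagonal, det_unique, show ⅟(diagonal d) = diagonal d⁻¹ from rfl]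
  simp [mul_apply, diagonal_apply, div_eq_mul_inv, mul_right_comm]

theorem principalDet_eq_prod_of_pairwise {ι : Type*} [DecidableEq ι] {A : Matrix ι ι ℝ}
    {S : Finset ι} (hA : ∀ i ∈ S, ∀ j ∈ S, i ≠ j → A i j = 0) :
    principalDet A S = ∏ i ∈ S, A i i := by
  rw [principalDet, ← prod_coe_sort, ← det_diagonal]
  congr 1
  ext i j
  by_cases hij : i = j
  · simp [hij]
  · simp [hij, hA i i.2 j j.2 (Subtype.coe_ne_coe.mpr hij)]

theorem principalDet_insert {ι : Type*} [DecidableEq ι] {A : Matrix ι ι ℝ} {T : Finset ι}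
    {i₀ : ι} (hi₀ : i₀ ∉ T) (hA : ∀ i ∈ T, ∀ j ∈ T, i ≠ j → A i j = 0)
    (hdiag : ∀ i ∈ T, A i i ≠ 0) :
    principalDet A (insert i₀ T) =
      (∏ i ∈ T, A i i) * (A i₀ i₀ - ∑ i ∈ T, A i₀ i * A i i₀ / A i i) := by
  let e := (subtypeInsertEquivOption hi₀).trans (Equiv.optionEquivSumPUnit.{0} T)
  have hblocks : (A.submatrix (fun i : ↥(insert i₀ T) => (i : ι))
      (fun j : ↥(insert i₀ T) => (j : ι))).submatrix e.symm e.symm =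
      fromBlocks (diagonal fun i : T => A i i) (of fun i (_ : Unit) => A i i₀)
        (of fun (_ : Unit) j => A i₀ j) (of fun _ _ => A i₀ i₀) := by
    ext (i | _) (j | _)
    · by_cases hij : i = j
      · simp [e, subtypeInsertEquivOption, hij]
      · simp [e, subtypeInsertEquivOption, hij, hA i i.2 j j.2 (Subtype.coe_ne_coe.mpr hij)]
    all_goals simp [e, subtypeInsertEquivOption]
  rw [principalDet, ← det_submatrix_equiv_self e.symm, hblocks,
    det_fromBlocks_diagonal_unit (fun i : T => A i i) _ _ _ fun i => hdiag i i.2,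
    prod_coe_sort T fun i => A i i, sum_coe_sort T fun i => A i₀ i * A i i₀ / A i i]

section ArrowMatrix

variable {ι : Type*} [DecidableEq ι] {A : Matrix ι ι ℝ} {x : ι → ℝ} {t : ℝ} {i₀ : ι}
  {S : Finset ι} {k : ℕ}

theorem principalDet_eq_of_notMem (hS : i₀ ∉ S)
    (hAii : ∀ i, i ≠ i₀ → A i i = (1 + t) * exp (x i))
    (hAij : ∀ i j, i ≠ i₀ → j ≠ i₀ → i ≠ j → A i j = 0) :
    principalDet A S = (1 + t) ^ #S * exp (∑ i ∈ S, x i) := by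
  have hne {i} (hi : i ∈ S) : i ≠ i₀ := ne_of_mem_of_not_mem hi hS
  rw [principalDet_eq_prod_of_pairwise fun i hi j hj => hAij i j (hne hi) (hne hj),
    prod_congr rfl fun i hi => hAii i (hne hi), prod_mul_distrib, prod_const, exp_sum]

theorem principalDet_le_of_notMem {δ : ℝ} (hS : i₀ ∉ S) (hk : #S = k + 1)
    (hs : ∑ i ∈ S, x i ≤ 1) (ht0 : 0 ≤ t) (ht1 : t ≤ 1) (hδ0 : 0 ≤ δ) (hδ : δ ≤ 1 / 2)
    (hAii : ∀ i, i ≠ i₀ → A i i = (1 + t) * exp (x i))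
    (hAij : ∀ i j, i ≠ i₀ → j ≠ i₀ → i ≠ j → A i j = 0) :
    principalDet A S ≤ exp (-δ) * (1 + δ) * (25 * (1 + t) ^ (k - 1) * exp t) :=
  calc principalDet A S = (1 + t) ^ (k + 1) * exp (∑ i ∈ S, x i) := by
        rw [principalDet_eq_of_notMem hS hAii hAij, hk]
    _ ≤ (1 + t) ^ (k - 1 + 2) * exp (∑ i ∈ S, x i) := by
        gcongr ?_ * _
        exact pow_le_pow_right₀ (by linarith) (by omega)
    _ = (1 + t) ^ (k - 1) * ((1 + t) ^ 2 * exp (∑ i ∈ S, x i)) := by ring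
    _ ≤ (1 + t) ^ (k - 1) * (25 * (exp (-δ) * (1 + δ)) * exp t) := by
        gcongr ?_ * ?_
        exact one_add_sq_mul_exp_le hs ht0 ht1 hδ0 hδ
    _ = exp (-δ) * (1 + δ) * (25 * (1 + t) ^ (k - 1) * exp t) := by ring

theorem principalDet_eq_of_mem (hS : i₀ ∈ S) (hk : #S = k + 1) (hk1 : 1 ≤ k) (ht : 0 < 1 + t)
    (hx : ∀ i, i ≠ i₀ → 0 ≤ x i) (hA00 : A i₀ i₀ = 25)
    (hA0i : ∀ i, i ≠ i₀ → A i₀ i = 5 * √(x i * exp (x i)))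
    (hAi0 : ∀ i, i ≠ i₀ → A i i₀ = 5 * √(x i * exp (x i)))
    (hAii : ∀ i, i ≠ i₀ → A i i = (1 + t) * exp (x i))
    (hAij : ∀ i j, i ≠ i₀ → j ≠ i₀ → i ≠ j → A i j = 0) :
    principalDet A S = 25 * (1 + t) ^ (k - 1) * exp t *
      (exp (-(t - ∑ i ∈ S.erase i₀, x i)) * (1 + (t - ∑ i ∈ S.erase i₀, x i))) := by
  set T := S.erase i₀
  have hne {i} (hi : i ∈ T) : i ≠ i₀ := ne_of_mem_erase hi
  have hterm : ∀ i ∈ T, A i₀ i * A i i₀ / A i i = 25 / (1 + t) * x i := fun i hi => by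
    rw [hA0i i (hne hi), hAi0 i (hne hi), hAii i (hne hi), ← mul_mul_mul_comm,
      mul_self_sqrt (mul_nonneg (hx i (hne hi)) (exp_pos _).le)]
    field_simp
    ring
  have hcard : #T = k := by rw [card_erase_of_mem hS, hk, add_tsub_cancel_right]
  rw [← insert_erase hS, principalDet_insert (notMem_erase i₀ S)
      (fun i hi j hj => hAij i j (hne hi) (hne hj)) fun i hi => by rw [hAii i (hne hi)]; positivity,
    sum_congr rfl hterm, ← mul_sum, prod_congr rfl fun i hi => hAii i (hne hi), prod_mul_distrib,
    prod_const, ← exp_sum, hcard, hA00]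
  obtain ⟨m, rfl⟩ : ∃ m, k = m + 1 := ⟨k - 1, by omega⟩
  have hexp : exp t * exp (-(t - ∑ i ∈ T, x i)) = exp (∑ i ∈ T, x i) := by
    rw [← exp_add]; ring_nf
  rw [add_tsub_cancel_right, mul_assoc _ (exp t), ← mul_assoc (exp t), hexp]
  field_simp
  ring

end ArrowMatrix

theorem stmt_3_general (n k : ℕ) (hk1 : 1 ≤ k)
    (x : Fin (n + 1) → ℝ) (hx : ∀ i : Fin (n + 1), i ≠ 0 → x i ∈ Set.Ioo (0 : ℝ) 1)
    (hsum : ∑ i ∈ Finset.univ.erase (0 : Fin (n + 1)), x i = 1)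
    (t : ℝ) (ht : t ∈ Set.Ioo (0 : ℝ) 1)
    (δ : ℝ) (hδ0 : 0 < δ) (hδhalf : δ ≤ 1 / 2)
    (hgap : ∀ T : Finset (Fin (n + 1)), 0 ∉ T →
      (∑ i ∈ T, x i) ≠ t → δ ≤ |(∑ i ∈ T, x i) - t|)
    (A : Matrix (Fin (n + 1)) (Fin (n + 1)) ℝ)
    (hA00 : A 0 0 = 25)
    (hA0i : ∀ i : Fin (n + 1), i ≠ 0 → A 0 i = 5 * Real.sqrt (x i * Real.exp (x i)))
    (hAi0 : ∀ i : Fin (n + 1), i ≠ 0 → A i 0 = 5 * Real.sqrt (x i * Real.exp (x i)))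
    (hAii : ∀ i : Fin (n + 1), i ≠ 0 → A i i = (1 + t) * Real.exp (x i))
    (hAij : ∀ i j : Fin (n + 1), i ≠ 0 → j ≠ 0 → i ≠ j → A i j = 0) :
    ∀ S : Finset (Fin (n + 1)), S.card = k + 1 →
      ((0 ∈ S ∧ ∑ i ∈ S.erase 0, x i = t) →
        principalDet A S = 25 * (1 + t) ^ (k - 1) * Real.exp t) ∧
      (¬(0 ∈ S ∧ ∑ i ∈ S.erase 0, x i = t) →
        principalDet A S ≤ Real.exp (-δ) * (1 + δ) * (25 * (1 + t) ^ (k - 1) * Real.exp t)) := by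
  intro S hS
  by_cases h0 : 0 ∈ S
  · have hdet := principalDet_eq_of_mem h0 hS hk1 (by linarith [ht.1]) (fun i hi => (hx i hi).1.le)
      hA00 hA0i hAi0 hAii hAij
    refine ⟨fun ⟨_, hs⟩ => by simp [hdet, hs], fun hnot => ?_⟩
    have hgap' : δ ≤ |t - ∑ i ∈ S.erase 0, x i| :=
      abs_sub_comm (∑ i ∈ S.erase 0, x i) t ▸ hgap _ (notMem_erase 0 S) fun hs => hnot ⟨h0, hs⟩
    rw [hdet, mul_comm (exp (-δ) * (1 + δ))]
    exact mul_le_mul_of_nonneg_left (exp_neg_mul_one_add_le_of_le_abs hδ0.le (by linarith) hgap')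
      (mul_nonneg (mul_nonneg (by norm_num) (pow_nonneg (by linarith [ht.1]) _)) (exp_pos t).le)
  · have hs : ∑ i ∈ S, x i ≤ 1 := hsum ▸ sum_le_sum_of_subset_of_nonneg
      (fun i hi => mem_erase.mpr ⟨ne_of_mem_of_not_mem hi h0, mem_univ i⟩)
      fun i hi _ => (hx i (ne_of_mem_erase hi)).1.le
    exact ⟨fun h => absurd h.1 h0, fun _ => principalDet_le_of_notMem h0 hS hs ht.1.le ht.2.le
      hδ0.le hδhalf hAii hAij⟩

theorem stmt_3 (n k : ℕ) (hn : 1 ≤ n) (hk1 : 1 ≤ k) (hkn : k ≤ n)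
    (x : Fin (n + 1) → ℝ) (hx : ∀ i : Fin (n + 1), i ≠ 0 → x i ∈ Set.Ioo (0 : ℝ) 1)
    (hsum : ∑ i ∈ Finset.univ.erase (0 : Fin (n + 1)), x i = 1)
    (t : ℝ) (ht : t ∈ Set.Ioo (0 : ℝ) 1)
    (δ : ℝ) (hδ0 : 0 < δ) (hδhalf : δ ≤ 1 / 2)
    (hgap : ∀ T : Finset (Fin (n + 1)), 0 ∉ T →
      (∑ i ∈ T, x i) ≠ t → δ ≤ |(∑ i ∈ T, x i) - t|)
    (A : Matrix (Fin (n + 1)) (Fin (n + 1)) ℝ)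
    (hA00 : A 0 0 = 25)
    (hA0i : ∀ i : Fin (n + 1), i ≠ 0 → A 0 i = 5 * Real.sqrt (x i * Real.exp (x i)))
    (hAi0 : ∀ i : Fin (n + 1), i ≠ 0 → A i 0 = 5 * Real.sqrt (x i * Real.exp (x i)))
    (hAii : ∀ i : Fin (n + 1), i ≠ 0 → A i i = (1 + t) * Real.exp (x i))
    (hAij : ∀ i j : Fin (n + 1), i ≠ 0 → j ≠ 0 → i ≠ j → A i j = 0) :
    ∀ S : Finset (Fin (n + 1)), S.card = k + 1 →
      ((0 ∈ S ∧ ∑ i ∈ S.erase 0, x i = t) →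
        principalDet A S = 25 * (1 + t) ^ (k - 1) * Real.exp t) ∧
      (¬(0 ∈ S ∧ ∑ i ∈ S.erase 0, x i = t) →
        principalDet A S ≤ Real.exp (-δ) * (1 + δ) * (25 * (1 + t) ^ (k - 1) * Real.exp t)) :=
  stmt_3_general n k hk1 x hx hsum t ht δ hδ0 hδhalf hgap A hA00 hA0i hAi0 hAii hAij
end

section
/- For any two n×n complex matrices A and B, |det(A) − det(B)| ≤ n · max(‖A‖₂, ‖B‖₂)^{n−1} · ‖A − B‖₂, where ‖·‖₂ denotes the spectral norm. -/
/-- The spectral norm of a complex square matrix: the operator norm of the induced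
linear map on Euclidean space. -/
noncomputable def matrixSpectralNorm {n : ℕ} (A : Matrix (Fin n) (Fin n) ℂ) : ℝ :=
  ‖Matrix.toEuclideanCLM (𝕜 := ℂ) (n := Fin n) A‖

/-!
Write `det A - det B` as a telescoping sum over `k` of determinants of the matrices whose
columns before `k` are those of `A`, whose `k`-th column is that of `A - B`, and whose remaining
columns are those of `B` (multilinearity of `det` in the columns). Every column of a matrix has
Euclidean norm at most its spectral norm, so Hadamard's inequality `|det M| ≤ ∏ ‖column‖` bounds
each of the `n` terms by `‖A - B‖₂ · max(‖A‖₂, ‖B‖₂)^(n-1)`.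

Hadamard's inequality itself reduces, after normalising the rows, to the case of unit rows, where
`M Mᴴ` is positive semidefinite with trace `n` and determinant `|det M|²`, so AM-GM on its
eigenvalues gives `|det M| ≤ 1`.
-/

open Finset
open scoped ComplexOrder

namespace Real

theorem prod_le_arith_mean_pow_card {ι : Type*} [Fintype ι] {μ : ι → ℝ} (hμ : ∀ i, 0 ≤ μ i) :
    ∏ i, μ i ≤ ((∑ i, μ i) / Fintype.card ι) ^ Fintype.card ι := by
  rcases isEmpty_or_nonempty ι with hι | hι
  · simp
  have hcard : (0 : ℝ) < Fintype.card ι := by exact_mod_cast Fintype.card_pos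
  have amgm := geom_mean_le_arith_mean_weighted univ (fun _ => (Fintype.card ι : ℝ)⁻¹) μ
    (fun _ _ => by positivity) (by simp [hcard.ne']) (fun i _ => hμ i)
  rw [← Finset.mul_sum, inv_mul_eq_div] at amgm
  calc ∏ i, μ i = (∏ i, μ i ^ (Fintype.card ι : ℝ)⁻¹) ^ Fintype.card ι := by
        rw [← Finset.prod_pow]
        refine prod_congr rfl fun i _ => ?_
        rw [← rpow_mul_natCast (hμ i), inv_mul_cancel₀ hcard.ne', rpow_one]
    _ ≤ _ := pow_le_pow_left₀ (prod_nonneg fun i _ => rpow_nonneg (hμ i) _) amgm _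

end Real

namespace Matrix

theorem det_sub_det_eq_sum {ι R : Type*} [Fintype ι] [DecidableEq ι] [LinearOrder ι]
    [CommRing R] (A B : Matrix ι ι R) :
    A.det - B.det =
      ∑ k, (of fun i => if i < k then A i else if i = k then A i - B i else B i).det := by
  obtain rfl : ‹DecidableEq ι› = LinearOrder.toDecidableEq := Subsingleton.elim _ _
  have h := (detRowAlternating (n := ι) (R := R)).toMultilinearMap.map_sub_map_piecewise
    (of.symm A) (of.symm B) univ
  simp only [mem_univ, true_imp_iff, AlternatingMap.coe_multilinearMap, piecewise_univ] at h
  refine h.trans (sum_congr rfl fun k _ => congrArg detRowAlternating (funext fun i => ?_))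
  simp only [@eq_comm _ k i]
  rfl

variable {𝕜 ι : Type*} [RCLike 𝕜] [Fintype ι] [DecidableEq ι]

theorem norm_det_le_one_of_norm_row_eq_one (M : Matrix ι ι 𝕜)
    (hM : ∀ i, ‖WithLp.toLp 2 (M i)‖ = 1) : ‖M.det‖ ≤ 1 := by
  have hG : (M * Mᴴ).PosSemidef := posSemidef_self_mul_conjTranspose M
  set μ := hG.isHermitian.eigenvalues
  have hdet : ‖M.det‖ ^ 2 = ∏ i, μ i := by
    have h := hG.isHermitian.det_eq_prod_eigenvalues
    rw [det_mul, det_conjTranspose, ← starRingEnd_apply, RCLike.mul_conj] at h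
    exact_mod_cast h
  have htrace : ∑ i, μ i = Fintype.card ι := by
    have h := hG.isHermitian.trace_eq_sum_eigenvalues
    have hdiag : ∀ i, (M * Mᴴ) i i = 1 := fun i => by
      simp only [mul_apply, conjTranspose_apply, ← starRingEnd_apply, RCLike.mul_conj]
      have hrow := congrArg (· ^ 2) (hM i)
      simp only [EuclideanSpace.norm_sq_eq, one_pow] at hrow
      exact_mod_cast hrow
    simp only [trace, diag, hdiag, sum_const, card_univ, nsmul_one] at h
    exact_mod_cast h.symm
  have hprod := Real.prod_le_arith_mean_pow_card hG.eigenvalues_nonneg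
  have hone : ((Fintype.card ι : ℝ) / Fintype.card ι) ^ Fintype.card ι = 1 := by
    rcases (Fintype.card ι).eq_zero_or_pos with h | h
    · simp [h]
    · rw [div_self (by positivity), one_pow]
  rw [← hdet, htrace, hone] at hprod
  exact (sq_le_one_iff₀ (norm_nonneg _)).mp hprod

theorem norm_det_le_prod_norm_row (M : Matrix ι ι 𝕜) :
    ‖M.det‖ ≤ ∏ i, ‖WithLp.toLp 2 (M i)‖ := by
  by_cases hzero : ∃ i, M i = 0
  · obtain ⟨i, hi⟩ := hzero
    rw [det_eq_zero_of_row_eq_zero i (fun j => congrFun hi j), norm_zero]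
    exact prod_nonneg fun i _ => norm_nonneg _
  push Not at hzero
  set c : ι → ℝ := fun i => ‖WithLp.toLp 2 (M i)‖
  have hc : ∀ i, 0 < c i := fun i => norm_pos_iff.mpr (by simpa using hzero i)
  set U : Matrix ι ι 𝕜 := of fun i j => (c i : 𝕜)⁻¹ * M i j
  have hU : ∀ i, ‖WithLp.toLp 2 (U i)‖ = 1 := fun i => by
    have : WithLp.toLp 2 (U i) = (c i : 𝕜)⁻¹ • WithLp.toLp 2 (M i) := rfl
    rw [this, norm_smul, norm_inv, RCLike.norm_ofReal, abs_of_pos (hc i),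
      inv_mul_cancel₀ (hc i).ne']
  have hMU : M = of fun i j => (c i : 𝕜) * U i j := by
    ext i j
    simp [U, (hc i).ne']
  rw [hMU, det_mul_column, norm_mul, ← RCLike.ofReal_prod, RCLike.norm_ofReal,
    abs_of_pos (prod_pos fun i _ => hc i)]
  exact mul_le_of_le_one_right (prod_nonneg fun i _ => (hc i).le)
    (norm_det_le_one_of_norm_row_eq_one U hU)

open scoped Matrix.Norms.L2Operator in
theorem norm_col_le_l2_opNorm {m n : Type*} [Fintype m] [Fintype n] [DecidableEq n]
    (A : Matrix m n 𝕜) (j : n) : ‖WithLp.toLp 2 (A.col j)‖ ≤ ‖A‖ := by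
  simpa [mulVec_single_one] using A.l2_opNorm_mulVec (EuclideanSpace.single j 1)

theorem norm_det_of_le_mul_pow (v : ι → ι → 𝕜) (k : ι) {r s : ℝ}
    (hr : ∀ i ≠ k, ‖WithLp.toLp 2 (v i)‖ ≤ r) (hs : ‖WithLp.toLp 2 (v k)‖ ≤ s) :
    ‖(of v).det‖ ≤ s * r ^ (Fintype.card ι - 1) :=
  calc ‖(of v).det‖ ≤ ∏ i, ‖WithLp.toLp 2 (v i)‖ := norm_det_le_prod_norm_row (of v)
    _ = ‖WithLp.toLp 2 (v k)‖ * ∏ i ∈ univ.erase k, ‖WithLp.toLp 2 (v i)‖ :=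
      (mul_prod_erase _ _ (mem_univ k)).symm
    _ ≤ s * ∏ _i ∈ univ.erase k, r :=
      mul_le_mul hs (prod_le_prod (fun _ _ => norm_nonneg _) fun i hi => hr i (ne_of_mem_erase hi))
        (prod_nonneg fun _ _ => norm_nonneg _) ((norm_nonneg _).trans hs)
    _ = s * r ^ (Fintype.card ι - 1) := by
      rw [prod_const, card_erase_of_mem (mem_univ k), card_univ]

open scoped Matrix.Norms.L2Operator in
theorem norm_det_sub_det_le (A B : Matrix ι ι 𝕜) :
    ‖A.det - B.det‖ ≤
      Fintype.card ι * max ‖A‖ ‖B‖ ^ (Fintype.card ι - 1) * ‖A - B‖ := by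
  let _ : LinearOrder ι := LinearOrder.lift' _ (Fintype.equivFin ι).injective
  rw [← det_transpose A, ← det_transpose B, det_sub_det_eq_sum]
  calc _ ≤ ∑ k : ι, ‖A - B‖ * max ‖A‖ ‖B‖ ^ (Fintype.card ι - 1) := by
        refine (norm_sum_le _ _).trans (sum_le_sum fun k _ => norm_det_of_le_mul_pow _ k ?_ ?_)
        · intro i hik
          simp only [hik, if_false]
          split_ifs
          · exact (norm_col_le_l2_opNorm A i).trans (le_max_left _ _)
          · exact (norm_col_le_l2_opNorm B i).trans (le_max_right _ _)
        · simp only [lt_irrefl, if_false, if_true]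
          exact norm_col_le_l2_opNorm (A - B) k
    _ = _ := by rw [sum_const, card_univ, nsmul_eq_mul]; ring

end Matrix

theorem stmt_4 (n : ℕ) (A B : Matrix (Fin n) (Fin n) ℂ) :
    ‖A.det - B.det‖ ≤
      n * max (matrixSpectralNorm A) (matrixSpectralNorm B) ^ (n - 1) * matrixSpectralNorm (A - B) := by
  have h := Matrix.norm_det_sub_det_le A B
  rw [Fintype.card_fin] at h
  exact h
end

section
/- Let k ≥ 1 be an integer and ε ∈ (0, 1/3]. Let A and B be real square matrices with the same index set such that |A_{i,j}| ≤ 25 for all i,j, and such that for all i,j there exists ρ_{i,j} ∈ [1−3ε, 1+3ε] with B_{i,j} = ρ_{i,j}·A_{i,j}. Then for every subset S of the index set with |S| = k+1, one has |det(A_S) − det(B_S)| ≤ (k+1)^{k+2} · 25^{k+1} · (1+3ε)^k · 3ε. -/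
open Finset

section LinearOrderedCommRing

variable {R : Type*} [CommRing R] [LinearOrder R] [IsStrictOrderedRing R]

theorem Finset.abs_prod_sub_prod_le {α : Type*} [DecidableEq α] (s : Finset α) {f g : α → R}
    {C d : R} (hf : ∀ i ∈ s, |f i| ≤ C) (hg : ∀ i ∈ s, |g i| ≤ C)
    (hfg : ∀ i ∈ s, |f i - g i| ≤ d) :
    |∏ i ∈ s, f i - ∏ i ∈ s, g i| ≤ #s * d * C ^ (#s - 1) := by
  induction s using Finset.induction_on with
  | empty => simp
  | insert a s ha ih =>
    simp only [mem_insert, forall_eq_or_imp] at hf hg hfg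
    have hC : 0 ≤ C := (abs_nonneg _).trans hf.1
    have hprod_f : |∏ i ∈ s, f i| ≤ C ^ #s := by
      rw [abs_prod, ← prod_const]
      exact prod_le_prod (fun i _ => abs_nonneg _) hf.2
    have hC_mul : C * (#s * d * C ^ (#s - 1)) = #s * d * C ^ #s := by
      rcases Nat.eq_zero_or_pos #s with h | h
      · simp [h]
      · rw [mul_left_comm, ← pow_succ', Nat.sub_add_cancel h]
    rw [prod_insert ha, prod_insert ha, card_insert_of_notMem ha, Nat.add_sub_cancel]
    calc |f a * ∏ i ∈ s, f i - g a * ∏ i ∈ s, g i|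
        = |(f a - g a) * ∏ i ∈ s, f i + g a * (∏ i ∈ s, f i - ∏ i ∈ s, g i)| := by
          congr 1; ring
      _ ≤ |f a - g a| * |∏ i ∈ s, f i| + |g a| * |∏ i ∈ s, f i - ∏ i ∈ s, g i| := by
        rw [← abs_mul, ← abs_mul]
        exact abs_add_le _ _
      _ ≤ d * C ^ #s + C * (#s * d * C ^ (#s - 1)) := by
        have hd : 0 ≤ d := (abs_nonneg _).trans hfg.1
        exact add_le_add (mul_le_mul hfg.1 hprod_f (abs_nonneg _) hd)
          (mul_le_mul hg.1 (ih hf.2 hg.2 hfg.2) (abs_nonneg _) hC)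
      _ = ↑(#s + 1) * d * C ^ #s := by rw [hC_mul]; push_cast; ring

theorem Matrix.abs_det_sub_det_le {n : Type*} [Fintype n] [DecidableEq n] {A B : Matrix n n R}
    {C d : R} (hA : ∀ i j, |A i j| ≤ C) (hB : ∀ i j, |B i j| ≤ C)
    (hAB : ∀ i j, |A i j - B i j| ≤ d) :
    |A.det - B.det| ≤
      (Fintype.card n).factorial * (Fintype.card n * d * C ^ (Fintype.card n - 1)) := by
  rw [Matrix.det_apply, Matrix.det_apply, ← sum_sub_distrib]
  calc |∑ σ : Equiv.Perm n, (σ.sign • ∏ i, A (σ i) i - σ.sign • ∏ i, B (σ i) i)|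
      ≤ ∑ σ : Equiv.Perm n, |∏ i, A (σ i) i - ∏ i, B (σ i) i| := by
        refine (abs_sum_le_sum_abs _ _).trans_eq (sum_congr rfl fun σ _ => ?_)
        rw [← smul_sub, Units.smul_def, zsmul_eq_mul, abs_mul, abs_unit_intCast, one_mul]
    _ ≤ ∑ _σ : Equiv.Perm n, Fintype.card n * d * C ^ (Fintype.card n - 1) :=
        sum_le_sum fun σ _ => (univ.abs_prod_sub_prod_le (fun i _ => hA _ _)
          (fun i _ => hB _ _) (fun i _ => hAB _ _)).trans_eq (by rw [card_univ])
    _ = _ := by rw [sum_const, card_univ, Fintype.card_perm, nsmul_eq_mul]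

end LinearOrderedCommRing

theorem stmt_5_general {ι : Type*} [DecidableEq ι] (k : ℕ)
    (ε : ℝ) (hε0 : 0 < ε)
    (A B : Matrix ι ι ℝ)
    (hAbound : ∀ i j, |A i j| ≤ 25)
    (hρ : ∀ i j, ∃ ρ : ℝ, ρ ∈ Set.Icc (1 - 3 * ε) (1 + 3 * ε) ∧ B i j = ρ * A i j) :
    ∀ S : Finset ι, S.card = k + 1 →
      |principalDet A S - principalDet B S| ≤
        (k + 1 : ℝ) ^ (k + 2) * 25 ^ (k + 1) * (1 + 3 * ε) ^ k * (3 * ε) := by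
  intro S hS
  have hA : ∀ i j, |A i j| ≤ 25 * (1 + 3 * ε) := fun i j =>
    (hAbound i j).trans (by linarith)
  have hAB : ∀ i j, |A i j - B i j| ≤ 25 * (3 * ε) := fun i j => by
    obtain ⟨ρ, hρ, hB⟩ := hρ i j
    rw [hB, ← one_sub_mul, abs_mul, mul_comm]
    exact mul_le_mul (hAbound i j) (Set.mem_Icc_iff_abs_le.mpr hρ) (abs_nonneg _) (by norm_num)
  have hB : ∀ i j, |B i j| ≤ 25 * (1 + 3 * ε) := fun i j => by
    have := abs_sub_abs_le_abs_sub (B i j) (A i j)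
    rw [abs_sub_comm] at this
    linarith [hAbound i j, hAB i j]
  have hdet := Matrix.abs_det_sub_det_le (n := S) (fun i j => hA i j) (fun i j => hB i j)
    (fun i j => hAB i j)
  rw [Fintype.card_coe, hS, Nat.add_sub_cancel] at hdet
  calc |principalDet A S - principalDet B S|
      ≤ (k + 1).factorial * ((k + 1 : ℕ) * (25 * (3 * ε)) * (25 * (1 + 3 * ε)) ^ k) := hdet
    _ ≤ (k + 1 : ℕ) ^ (k + 1) * ((k + 1 : ℕ) * (25 * (3 * ε)) * (25 * (1 + 3 * ε)) ^ k) := by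
        gcongr
        exact_mod_cast Nat.factorial_le_pow _
    _ = _ := by push_cast; rw [mul_pow]; ring

theorem stmt_5 {ι : Type*} [Fintype ι] [DecidableEq ι] (k : ℕ) (hk : 1 ≤ k)
    (ε : ℝ) (hε0 : 0 < ε) (hε : ε ≤ 1 / 3)
    (A B : Matrix ι ι ℝ)
    (hAbound : ∀ i j, |A i j| ≤ 25)
    (hρ : ∀ i j, ∃ ρ : ℝ, ρ ∈ Set.Icc (1 - 3 * ε) (1 + 3 * ε) ∧ B i j = ρ * A i j) :
    ∀ S : Finset ι, S.card = k + 1 →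
      |principalDet A S - principalDet B S| ≤
        (k + 1 : ℝ) ^ (k + 2) * 25 ^ (k + 1) * (1 + 3 * ε) ^ k * (3 * ε) :=
  stmt_5_general k ε hε0 A B hAbound hρ
end

section
/- For every even positive integer ℓ there exist 2^ℓ vectors b_1, …, b_{2^ℓ} ∈ ℝ^{2^{ℓ+1}} such that: every coordinate of every b_i lies in {0, 2^{−ℓ/2}}; ‖b_i‖ = 1 for all i; ⟨b_i, b_j⟩ = 1/2 for all i ≠ j; and ⟨b_i, 2^{−ℓ/2}·𝟙 − b_j⟩ = 1/2 for all i ≠ j, where 𝟙 denotes the all-ones vector in ℝ^{2^{ℓ+1}}. -/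
open Finset

private lemma zmod2_sum_ite_mul (a b : ZMod 2) (c : ℝ) :
    ∑ s : ZMod 2, (if s = a then c else 0) * (if s = b then c else 0)
      = if a = b then c ^ 2 else 0 := by
  simp only [ite_mul, zero_mul]
  rw [Finset.sum_ite_eq' Finset.univ a (fun s => c * if s = b then c else 0)]
  simp [mul_ite, sq]

private lemma zmod2_sum_ite (a : ZMod 2) (c : ℝ) :
    ∑ s : ZMod 2, (if s = a then c else 0) = c := by
  rw [Finset.sum_ite_eq' Finset.univ a (fun _ => c)]
  simp

private lemma key_sum_mul {N : ℕ} {V : Type*} [Fintype V]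
    (E : Fin N ≃ ZMod 2 × V) (f g : V → ZMod 2) (c : ℝ) :
    ∑ e, (if (E e).1 = f (E e).2 then c else 0) * (if (E e).1 = g (E e).2 then c else 0)
      = ∑ x : V, if f x = g x then c ^ 2 else 0 := by
  have h := Equiv.sum_comp E (fun p : ZMod 2 × V =>
    (if p.1 = f p.2 then c else 0) * (if p.1 = g p.2 then c else 0))
  rw [h, Fintype.sum_prod_type_right]
  exact Finset.sum_congr rfl fun x _ => zmod2_sum_ite_mul (f x) (g x) c

private lemma key_sum_single {N : ℕ} {V : Type*} [Fintype V]
    (E : Fin N ≃ ZMod 2 × V) (f : V → ZMod 2) (c : ℝ) :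
    ∑ e, (if (E e).1 = f (E e).2 then c else 0) = (Fintype.card V : ℝ) * c := by
  have h := Equiv.sum_comp E (fun p : ZMod 2 × V => (if p.1 = f p.2 then c else 0))
  rw [h, Fintype.sum_prod_type_right]
  rw [Finset.sum_congr rfl fun x (_ : x ∈ Finset.univ) => zmod2_sum_ite (f x) c]
  rw [Finset.sum_const, nsmul_eq_mul, Finset.card_univ]

private lemma count_half (ℓ : ℕ) (hℓ : 0 < ℓ) (m : Fin ℓ → ZMod 2) (hm : m ≠ 0) :
    (Finset.univ.filter (fun x : Fin ℓ → ZMod 2 => ∑ k, m k * x k = 0)).card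
      = 2 ^ (ℓ - 1) := by
  obtain ⟨k0, hk0⟩ : ∃ k, m k ≠ 0 := by
    by_contra h; push_neg at h; exact hm (funext fun k => h k)
  have hone : ∀ a : ZMod 2, a ≠ 0 → a = 1 := by decide
  have hmk0 : m k0 = 1 := hone _ hk0
  set φ : (Fin ℓ → ZMod 2) → ZMod 2 := fun x => ∑ k, m k * x k with hφ
  set σ : (Fin ℓ → ZMod 2) → (Fin ℓ → ZMod 2) := fun x => x + Pi.single k0 1 with hσ
  have hφσ : ∀ x, φ (σ x) = φ x + 1 := by
    intro x
    simp only [hφ, hσ, Pi.add_apply, mul_add, Finset.sum_add_distrib]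
    congr 1
    have : ∀ k, m k * (Pi.single k0 (1 : ZMod 2) : Fin ℓ → ZMod 2) k
        = if k = k0 then m k else 0 := by
      intro k
      by_cases h : k = k0 <;> simp [Pi.single_apply, h]
    rw [Finset.sum_congr rfl (fun k _ => this k), Finset.sum_ite_eq' Finset.univ k0 m]
    simp [hmk0]
  have hσσ : ∀ x, σ (σ x) = x := by
    intro x
    have hss : (Pi.single k0 (1 : ZMod 2) : Fin ℓ → ZMod 2) + Pi.single k0 1 = 0 := by
      ext k
      by_cases h : k = k0 <;> simp [Pi.single_apply, h] <;> decide
    simp [hσ, add_assoc, hss]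
  have hcardeq :
      (Finset.univ.filter (fun x => φ x = 0)).card
        = (Finset.univ.filter (fun x => φ x = 1)).card := by
    apply Finset.card_bij' (fun x _ => σ x) (fun x _ => σ x)
    · intro a ha
      simp only [Finset.mem_filter, Finset.mem_univ, true_and] at ha ⊢
      rw [hφσ, ha]
      decide
    · intro a ha
      simp only [Finset.mem_filter, Finset.mem_univ, true_and] at ha ⊢
      rw [hφσ, ha]
      decide
    · intro a _; exact hσσ a
    · intro a _; exact hσσ a
  have hsplit :
      (Finset.univ.filter (fun x => φ x = 0)).card
        + (Finset.univ.filter (fun x => ¬ φ x = 0)).card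
        = Fintype.card (Fin ℓ → ZMod 2) :=
    Finset.card_filter_add_card_filter_not _
  have hne : (Finset.univ.filter (fun x => ¬ φ x = 0))
      = (Finset.univ.filter (fun x => φ x = 1)) := by
    apply Finset.filter_congr
    intro x _
    constructor
    · intro h; exact hone _ h
    · intro h; rw [h]; decide
  have hcard : Fintype.card (Fin ℓ → ZMod 2) = 2 ^ ℓ := by
    simp [Fintype.card_fun]
  have hpow : 2 ^ ℓ = 2 * 2 ^ (ℓ - 1) := by
    conv_lhs => rw [show ℓ = (ℓ - 1) + 1 by omega]
    ring
  rw [hne, ← hcardeq] at hsplit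
  have h2A : 2 * (Finset.univ.filter (fun x => φ x = 0)).card = 2 * 2 ^ (ℓ - 1) := by
    rw [two_mul, hsplit, hcard, hpow]
  exact Nat.eq_of_mul_eq_mul_left (by norm_num) h2A

theorem stmt_11 (ℓ : ℕ) (hpos : 0 < ℓ) (heven : Even ℓ) :
    ∃ b : Fin (2 ^ ℓ) → (Fin (2 ^ (ℓ + 1)) → ℝ),
      (∀ i e, b i e = 0 ∨ b i e = (2 : ℝ) ^ (-(ℓ : ℝ) / 2)) ∧
      (∀ i, ∑ e, b i e ^ 2 = 1) ∧
      (∀ i j, i ≠ j → ∑ e, b i e * b j e = 1 / 2) ∧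
      (∀ i j, i ≠ j → ∑ e, b i e * ((2 : ℝ) ^ (-(ℓ : ℝ) / 2) - b j e) = 1 / 2) := by
  set c : ℝ := (2 : ℝ) ^ (-(ℓ : ℝ) / 2) with hc
  have hc2 : c ^ 2 = (2 : ℝ) ^ (-(ℓ : ℝ)) := by
    rw [hc, ← Real.rpow_natCast ((2:ℝ) ^ (-(ℓ:ℝ)/2)) 2,
      ← Real.rpow_mul (by norm_num : (0:ℝ) ≤ 2)]
    norm_num
  have h1 : ((2 : ℕ) ^ ℓ : ℝ) * c ^ 2 = 1 := by
    rw [hc2]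
    have hcast : ((2:ℕ)^ℓ : ℝ) = (2:ℝ) ^ ((ℓ:ℕ):ℝ) := by
      rw [Real.rpow_natCast]; norm_cast
    rw [hcast, ← Real.rpow_add (by norm_num : (0:ℝ) < 2)]
    simp
  have h2 : ((2 : ℕ) ^ (ℓ - 1) : ℝ) * c ^ 2 = 1 / 2 := by
    have hp : ((2:ℕ)^ℓ : ℝ) = 2 * ((2:ℕ)^(ℓ-1) : ℝ) := by
      rw [show ℓ = (ℓ - 1) + 1 by omega]
      push_cast; ring
    rw [hp, mul_assoc] at h1
    linear_combination h1 / 2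
  have cardV : Fintype.card (Fin ℓ → ZMod 2) = 2 ^ ℓ := by simp [Fintype.card_fun]
  have I : Fin (2 ^ ℓ) ≃ (Fin ℓ → ZMod 2) :=
    Fintype.equivOfCardEq (by simp [cardV])
  have E : Fin (2 ^ (ℓ + 1)) ≃ (ZMod 2 × (Fin ℓ → ZMod 2)) :=
    Fintype.equivOfCardEq (by simp [cardV]; ring)
  set φ : (Fin ℓ → ZMod 2) → (Fin ℓ → ZMod 2) → ZMod 2 :=
    fun v x => ∑ k, v k * x k with hφdef
  have hcross : ∀ i j : Fin (2 ^ ℓ), i ≠ j →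
      ∑ e, (if (E e).1 = φ (I i) (E e).2 then c else 0) *
        (if (E e).1 = φ (I j) (E e).2 then c else 0) = 1 / 2 := by
    intro i j hij
    rw [key_sum_mul E (φ (I i)) (φ (I j)) c, ← Finset.sum_filter, Finset.sum_const,
      nsmul_eq_mul]
    have hm : (I i - I j) ≠ 0 := sub_ne_zero.mpr (fun h => hij (I.injective h))
    have hiff : ∀ x, (φ (I i) x = φ (I j) x) ↔ (∑ k, (I i - I j) k * x k = 0) := by
      intro x
      simp only [hφdef, Pi.sub_apply, sub_mul, Finset.sum_sub_distrib, sub_eq_zero]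
    rw [Finset.filter_congr (fun x (_ : x ∈ Finset.univ) => hiff x)]
    rw [count_half ℓ hpos _ hm]
    push_cast at h2 ⊢
    linarith
  refine ⟨fun i e => if (E e).1 = φ (I i) (E e).2 then c else 0, ?_, ?_, hcross, ?_⟩
  · intro i e
    by_cases h : (E e).1 = φ (I i) (E e).2 <;> simp [h, hc]
  · intro i
    have hsq : ∀ e : Fin (2 ^ (ℓ + 1)),
        (if (E e).1 = φ (I i) (E e).2 then c else 0) ^ 2
          = (if (E e).1 = φ (I i) (E e).2 then c else 0) *
            (if (E e).1 = φ (I i) (E e).2 then c else 0) := fun e => sq _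
    rw [Finset.sum_congr rfl (fun e _ => hsq e), key_sum_mul E (φ (I i)) (φ (I i)) c]
    simp only [if_pos rfl]  -- wrong? condition is `φ (I i) x = φ (I i) x`
    rw [Finset.sum_const, nsmul_eq_mul, Finset.card_univ, cardV]
    push_cast at h1 ⊢
    linarith
  · intro i j hij
    have hsum := key_sum_single E (φ (I i)) c
    rw [cardV] at hsum
    have expand : ∑ e, (if (E e).1 = φ (I i) (E e).2 then c else 0) *
        (c - (if (E e).1 = φ (I j) (E e).2 then c else 0))
        = (∑ e, (if (E e).1 = φ (I i) (E e).2 then c else 0)) * c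
          - ∑ e, (if (E e).1 = φ (I i) (E e).2 then c else 0) *
            (if (E e).1 = φ (I j) (E e).2 then c else 0) := by
      rw [Finset.sum_mul, ← Finset.sum_sub_distrib]
      exact Finset.sum_congr rfl fun e _ => by ring
    rw [expand, hsum, hcross i j hij]
    push_cast at h1 ⊢
    nlinarith
end

section
/- Let m ≥ 1 and let v_1, …, v_m be vectors in a real inner product space with ‖v_i‖² = 4 for every i, and suppose |⟨v_1, v_i⟩| ≥ 2 for every i ∈ {2,…,m}. Then the determinant of the m×m Gram matrix G, G_{i,j} = ⟨v_i, v_j⟩, satisfies det(G) ≤ 4 · 3^{m−1}. -/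
/-!
Subtracting from every `v i` (`i ≠ 0`) its projection onto `v 0` is a unimodular change of the
vectors, so it leaves the Gram determinant unchanged; afterwards `v 0` is orthogonal to the
others, and `det G = ‖v 0‖² · det G'` with `G'` the Gram matrix of the projected vectors `u i`.
By Hadamard's inequality (proved the same way, by induction) `det G' ≤ ∏ ‖u i‖²`, and
`‖u i‖² = ‖v i‖² - ⟪v 0, v i⟫² / ‖v 0‖² ≤ 4 - 4 / 4 = 3`.
-/

open Matrix
open scoped RealInnerProductSpace

section
variable {E ι : Type*} [NormedAddCommGroup E] [InnerProductSpace ℝ E]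

lemma det_of_inner_add_smul_left [Fintype ι] [DecidableEq ι] (x y : ι → E) (c : ι → ℝ)
    (k : ι) (hk : c k = 0) :
    (of fun i j => ⟪x i + c i • x k, y j⟫).det = (of fun i j => ⟪x i, y j⟫).det :=
  det_eq_of_forall_row_eq_smul_add_const c k hk fun i j => by
    simp [inner_add_left, real_inner_smul_left]

lemma det_gram_add_smul [Fintype ι] [DecidableEq ι] (w : ι → E) (c : ι → ℝ) (k : ι)
    (hk : c k = 0) : (gram ℝ fun i => w i + c i • w k).det = (gram ℝ w).det := by
  set w' := fun i => w i + c i • w k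
  calc (gram ℝ w').det = (of fun i j => ⟪w i, w' j⟫).det :=
        det_of_inner_add_smul_left w w' c k hk
    _ = (of fun i j => ⟪w' i, w j⟫).det := by
        rw [← det_transpose]; congr 1; ext i j; exact real_inner_comm _ _
    _ = (gram ℝ w).det := det_of_inner_add_smul_left w w c k hk

lemma det_gram_succ_of_inner_eq_zero {n : ℕ} (w : Fin (n + 1) → E)
    (h : ∀ i : Fin n, ⟪w 0, w i.succ⟫ = 0) :
    (gram ℝ w).det = ‖w 0‖ ^ 2 * (gram ℝ fun i : Fin n => w i.succ).det := by
  rw [det_succ_row_zero, Fin.sum_univ_succ, Finset.sum_eq_zero fun j _ => by simp [h j]]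
  simp only [Fin.val_zero, pow_zero, one_mul, add_zero, gram_apply, Fin.succAbove_zero,
    real_inner_self_eq_norm_sq]
  rfl

lemma inner_sub_inner_div_smul (e x : E) : ⟪e, x - (⟪e, x⟫ / ‖e‖ ^ 2) • e⟫ = 0 := by
  rcases eq_or_ne e 0 with rfl | he
  · simp
  rw [inner_sub_right, real_inner_smul_right, real_inner_self_eq_norm_sq]
  field_simp
  ring

lemma norm_sub_inner_div_smul_sq (e x : E) :
    ‖x - (⟪e, x⟫ / ‖e‖ ^ 2) • e‖ ^ 2 = ‖x‖ ^ 2 - ⟪e, x⟫ ^ 2 / ‖e‖ ^ 2 := by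
  rcases eq_or_ne e 0 with rfl | he
  · simp
  have : ‖e‖ ≠ 0 := norm_ne_zero_iff.mpr he
  rw [norm_sub_sq_real, real_inner_smul_right, real_inner_comm x e, norm_smul, Real.norm_eq_abs,
    mul_pow, sq_abs]
  field_simp
  ring

lemma det_gram_eq_mul_det_gram_sub {n : ℕ} (w : Fin (n + 1) → E) :
    (gram ℝ w).det = ‖w 0‖ ^ 2 *
      (gram ℝ fun i : Fin n => w i.succ - (⟪w 0, w i.succ⟫ / ‖w 0‖ ^ 2) • w 0).det := by
  set c : Fin (n + 1) → ℝ := Fin.cons 0 fun i => -(⟪w 0, w i.succ⟫ / ‖w 0‖ ^ 2)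
  rw [← det_gram_add_smul w c 0 rfl, det_gram_succ_of_inner_eq_zero]
  · simp [c, sub_eq_add_neg]
  · intro i
    simpa [c, sub_eq_add_neg] using inner_sub_inner_div_smul (w 0) (w i.succ)

lemma det_gram_fin_le_prod_norm_sq : ∀ {n : ℕ} (w : Fin n → E), (gram ℝ w).det ≤ ∏ i, ‖w i‖ ^ 2
  | 0, _ => by simp
  | n + 1, w => by
    rw [det_gram_eq_mul_det_gram_sub, Fin.prod_univ_succ]
    gcongr
    refine (det_gram_fin_le_prod_norm_sq _).trans <|
      Finset.prod_le_prod (fun _ _ => by positivity) fun i _ => ?_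
    rw [norm_sub_inner_div_smul_sq]
    exact sub_le_self _ (by positivity)

theorem det_gram_le_prod_norm_sq [Fintype ι] [DecidableEq ι] (w : ι → E) :
    (gram ℝ w).det ≤ ∏ i, ‖w i‖ ^ 2 := by
  let e := Fintype.equivFin ι
  have hw : gram ℝ w = (gram ℝ (w ∘ e.symm)).submatrix e e := by ext; simp
  rw [hw, det_submatrix_equiv_self, ← e.symm.prod_comp]
  exact det_gram_fin_le_prod_norm_sq _

end

theorem stmt_12 {E : Type*} [NormedAddCommGroup E] [InnerProductSpace ℝ E]
    (m : ℕ) (hm : 1 ≤ m) (v : Fin m → E)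
    (hnorm : ∀ i, ‖v i‖ ^ 2 = 4)
    (hcorr : ∀ i : Fin m, i ≠ ⟨0, hm⟩ → |(inner ℝ (v ⟨0, hm⟩) (v i) : ℝ)| ≥ 2)
    (G : Matrix (Fin m) (Fin m) ℝ)
    (hG : ∀ i j, G i j = inner ℝ (v i) (v j)) :
    G.det ≤ 4 * 3 ^ (m - 1) := by
  obtain ⟨n, rfl⟩ : ∃ n, m = n + 1 := ⟨m - 1, by omega⟩
  rw [show G = gram ℝ v from Matrix.ext hG, det_gram_eq_mul_det_gram_sub, Nat.add_sub_cancel,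
    ← hnorm 0]
  gcongr ‖v 0‖ ^ 2 * ?_
  refine (det_gram_le_prod_norm_sq _).trans <|
    (Finset.prod_le_prod (fun _ _ => by positivity) fun i _ => ?_).trans_eq (Fin.prod_const n 3)
  have hcorr_i : 2 ≤ |⟪v 0, v i.succ⟫| := hcorr i.succ (Fin.succ_ne_zero i)
  have hcorr_sq : 2 ^ 2 ≤ ⟪v 0, v i.succ⟫ ^ 2 :=
    sq_le_sq.mpr (by rwa [abs_two])
  rw [norm_sub_inner_div_smul_sq, hnorm, hnorm]
  linarith
end

section
/- Let M be a real symmetric positive semidefinite (m+n)×(m+n) matrix written in block form M = [[A, C],[Cᵀ, B]], where A is m×m and B is n×n. Then det(M) ≤ det(A) · det(B) (Fischer's inequality). -/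
/-!
If `M` is singular, the right-hand side is nonnegative because `A` and `B` are principal
submatrices of a positive semidefinite matrix. Otherwise `A` is positive definite and the Schur
complement gives `det M = det A * det (B - Cᴴ A⁻¹ C)`, where `Cᴴ A⁻¹ C` is positive semidefinite.
It remains that `det` is monotone on positive semidefinite matrices: for `X` positive definite,
`X + S = √X (1 + T) √X` with `T = √X⁻¹ S √X⁻¹ ⪰ 0`, and `det (1 + T) = ∏ (1 + λᵢ) ≥ 1`.
-/

namespace Matrix

variable {ι : Type*} [Fintype ι] [DecidableEq ι]

theorem IsHermitian.det_one_add {T : Matrix ι ι ℝ} (hT : T.IsHermitian) :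
    (1 + T).det = ∏ i, (1 + hT.eigenvalues i) := by
  have : 1 + T = cfc (fun x : ℝ => 1 + x) T := by
    rw [cfc_add .., cfc_const_one .., cfc_id' ..]
  rw [this, hT.cfc_eq]
  simp [IsHermitian.cfc, -Unitary.conjStarAlgAut_apply]

theorem PosSemidef.one_le_det_one_add {T : Matrix ι ι ℝ} (hT : T.PosSemidef) :
    1 ≤ (1 + T).det := by
  rw [hT.isHermitian.det_one_add]
  exact Finset.one_le_prod fun i _ => le_add_of_nonneg_right (hT.eigenvalues_nonneg i)

open scoped MatrixOrder in
theorem PosSemidef.det_le_det_add {X S : Matrix ι ι ℝ} (hX : X.PosSemidef) (hS : S.PosSemidef) :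
    X.det ≤ (X + S).det := by
  by_cases hXpd : X.PosDef
  · set R := CFC.sqrt X
    have hRR : R * R = X := CFC.sqrt_mul_sqrt_self X hX.nonneg
    have hR : IsUnit R.det := by
      refine isUnit_iff_ne_zero.mpr fun h0 => hXpd.det_pos.ne' ?_
      rw [← hRR, det_mul, h0, zero_mul]
    have hT : (R⁻¹ * S * R⁻¹).PosSemidef := by
      have := hS.mul_mul_conjTranspose_same R⁻¹
      rwa [(nonneg_iff_posSemidef.mp (CFC.sqrt_nonneg X)).isHermitian.inv.eq] at this
    have hfactor : X + S = R * (1 + R⁻¹ * S * R⁻¹) * R := by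
      rw [mul_add, add_mul, mul_one, hRR, ← Matrix.mul_assoc, ← Matrix.mul_assoc,
        mul_nonsing_inv _ hR, Matrix.one_mul, Matrix.mul_assoc, nonsing_inv_mul _ hR,
        Matrix.mul_one]
    calc X.det = 1 * X.det := (one_mul _).symm
      _ ≤ (1 + R⁻¹ * S * R⁻¹).det * X.det := by
        gcongr
        exacts [hX.det_nonneg, hT.one_le_det_one_add]
      _ = (X + S).det := by rw [hfactor, ← hRR, det_mul, det_mul, det_mul]; ring
  · rw [hX.posDef_iff_det_ne_zero, not_not] at hXpd
    rw [hXpd]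
    exact (hX.add hS).det_nonneg

variable {m n : Type*} [Fintype m] [Fintype n] [DecidableEq m] [DecidableEq n]

theorem PosSemidef.det_fromBlocks_le {A : Matrix m m ℝ} {B : Matrix n n ℝ} {C : Matrix m n ℝ}
    (hM : (fromBlocks A C Cᴴ B).PosSemidef) :
    (fromBlocks A C Cᴴ B).det ≤ A.det * B.det := by
  by_cases hMpd : (fromBlocks A C Cᴴ B).PosDef
  · have hA : A.PosDef := hMpd.submatrix Sum.inl_injective
    have := hA.isUnit.invertible
    have hSchur : (B - Cᴴ * A⁻¹ * C).PosSemidef := (PosDef.fromBlocks₁₁ C B hA).mp hM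
    have hS : (Cᴴ * A⁻¹ * C).PosSemidef := hA.inv.posSemidef.conjTranspose_mul_mul_same C
    rw [det_fromBlocks₁₁, invOf_eq_nonsing_inv]
    gcongr
    · exact hA.det_pos.le
    · simpa using hSchur.det_le_det_add hS
  · rw [hM.posDef_iff_det_ne_zero, not_not] at hMpd
    rw [hMpd]
    exact mul_nonneg (hM.submatrix Sum.inl).det_nonneg (hM.submatrix Sum.inr).det_nonneg

end Matrix

theorem stmt_13 (m n : ℕ) (A : Matrix (Fin m) (Fin m) ℝ) (B : Matrix (Fin n) (Fin n) ℝ)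
    (C : Matrix (Fin m) (Fin n) ℝ)
    (hM : (Matrix.fromBlocks A C C.transpose B).PosSemidef) :
    (Matrix.fromBlocks A C C.transpose B).det ≤ A.det * B.det := by
  rw [← Matrix.conjTranspose_eq_transpose_of_trivial] at hM ⊢
  exact hM.det_fromBlocks_le
end

section
/- Let v_1, …, v_m be vectors in a real inner product space with ‖v_i‖² = 4 for every i, and let R ⊆ {2,…,m} be a set of indices such that for every i ∈ R there exists some j < i with ⟨v_j, v_i⟩ = 1/2. Then the determinant of the m×m Gram matrix of v_1,…,v_m is at most 4^m · (63/64)^{|R|}. -/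
/-!
The Gram matrix of `v` factors as `L * diagonal (‖g i‖²) * Lᵀ`, where `g` is the Gram–Schmidt
orthogonalisation of `v` and `L` is unit lower triangular, so its determinant is `∏ ‖g i‖²`.
Always `‖g i‖² ≤ ‖v i‖² = 4`. For `i ∈ R`, the earlier `v j` with `⟪v j, v i⟫ = 1/2` is orthogonal
to `g i`, so Cauchy–Schwarz gives `1/4 ≤ ‖v j‖² ‖v i - g i‖² = 4 (4 - ‖g i‖²)`, i.e.
`‖g i‖² ≤ 4 · 63/64`.
-/

open Finset InnerProductSpace Matrix

section Gram

variable {E : Type*} [NormedAddCommGroup E] [InnerProductSpace ℝ E] {m n : Type*}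

theorem Matrix.gram_eq_mul_gram_mul_transpose [Fintype n] (L : Matrix m n ℝ) (w : n → E)
    {v : m → E} (hv : ∀ i, v i = ∑ k, L i k • w k) : gram ℝ v = L * gram ℝ w * Lᵀ := by
  ext i j
  simp only [gram_apply, mul_apply, transpose_apply, hv, sum_inner, inner_sum,
    real_inner_smul_left, real_inner_smul_right, sum_mul]
  exact sum_congr rfl fun _ _ ↦ sum_congr rfl fun _ _ ↦ by ring

theorem Matrix.gram_eq_diagonal [DecidableEq n] {w : n → E}
    (hw : Pairwise fun i j ↦ inner ℝ (w i) (w j) = 0) :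
    gram ℝ w = diagonal fun i ↦ ‖w i‖ ^ 2 := by
  ext i j
  rcases eq_or_ne i j with rfl | hij
  · simp [gram_apply]
  · simp [gram_apply, hw hij, hij]

end Gram

namespace InnerProductSpace

variable {E : Type*} [NormedAddCommGroup E] [InnerProductSpace ℝ E]
  {ι : Type*} [LinearOrder ι] [LocallyFiniteOrderBot ι] [WellFoundedLT ι]

local notation "𝒢" => gramSchmidt ℝ

theorem sub_gramSchmidt_eq_sum (v : ι → E) (i : ι) :
    v i - 𝒢 v i = ∑ j ∈ Iio i, (inner ℝ (𝒢 v j) (v i) / ‖𝒢 v j‖ ^ 2) • 𝒢 v j := by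
  have h := gramSchmidt_def'' ℝ v i
  simp only [RCLike.ofReal_real_eq_id, id] at h
  rw [sub_eq_iff_eq_add', ← h]

theorem inner_gramSchmidt_sub_gramSchmidt (v : ι → E) (i : ι) :
    inner ℝ (𝒢 v i) (v i - 𝒢 v i) = 0 := by
  rw [sub_gramSchmidt_eq_sum, inner_sum]
  refine sum_eq_zero fun j hj ↦ ?_
  rw [real_inner_smul_right, gramSchmidt_orthogonal ℝ v (mem_Iio.1 hj).ne', mul_zero]

theorem norm_sq_eq_norm_gramSchmidt_sq_add (v : ι → E) (i : ι) :
    ‖v i‖ ^ 2 = ‖𝒢 v i‖ ^ 2 + ‖v i - 𝒢 v i‖ ^ 2 := by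
  conv_lhs => rw [← add_sub_cancel (𝒢 v i) (v i)]
  rw [norm_add_sq_real, inner_gramSchmidt_sub_gramSchmidt]
  ring

theorem norm_gramSchmidt_sq_le (v : ι → E) (i : ι) : ‖𝒢 v i‖ ^ 2 ≤ ‖v i‖ ^ 2 := by
  rw [norm_sq_eq_norm_gramSchmidt_sq_add v i]
  exact le_add_of_nonneg_right (sq_nonneg _)

/-- `v j` is orthogonal to `𝒢 v i`, so it only sees the component `v i - 𝒢 v i` of `v i`. -/
theorem inner_sq_le_mul_sub_norm_gramSchmidt_sq (v : ι → E) {i j : ι} (hji : j < i) :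
    inner ℝ (v j) (v i) ^ 2 ≤ ‖v j‖ ^ 2 * (‖v i‖ ^ 2 - ‖𝒢 v i‖ ^ 2) := by
  have h : inner ℝ (v j) (v i) = inner ℝ (v j) (v i - 𝒢 v i) := by
    rw [inner_sub_right, inner_eq_zero_symm.1 (gramSchmidt_inv_triangular ℝ v hji), sub_zero]
  rw [h, norm_sq_eq_norm_gramSchmidt_sq_add v i, add_sub_cancel_left, ← mul_pow, ← sq_abs]
  exact pow_le_pow_left₀ (abs_nonneg _) (abs_real_inner_le_norm _ _) 2

noncomputable def gramSchmidtCoeff (v : ι → E) : Matrix ι ι ℝ :=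
  of fun i j ↦ if i = j then 1 else inner ℝ (𝒢 v j) (v i) / ‖𝒢 v j‖ ^ 2

@[simp]
theorem gramSchmidtCoeff_self (v : ι → E) (i : ι) : gramSchmidtCoeff v i i = 1 :=
  if_pos rfl

theorem gramSchmidtCoeff_of_ne (v : ι → E) {i j : ι} (hij : i ≠ j) :
    gramSchmidtCoeff v i j = inner ℝ (𝒢 v j) (v i) / ‖𝒢 v j‖ ^ 2 :=
  if_neg hij

theorem isLowerTriangular_gramSchmidtCoeff (v : ι → E) :
    (gramSchmidtCoeff v).IsLowerTriangular := fun i j (hij : i < j) ↦ by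
  rw [gramSchmidtCoeff_of_ne v hij.ne, gramSchmidt_inv_triangular ℝ v hij, zero_div]

theorem det_gramSchmidtCoeff [Fintype ι] (v : ι → E) : (gramSchmidtCoeff v).det = 1 := by
  simp [det_of_isLowerTriangular _ (isLowerTriangular_gramSchmidtCoeff v)]

theorem sum_gramSchmidtCoeff_smul [Fintype ι] (v : ι → E) (i : ι) :
    ∑ j, gramSchmidtCoeff v i j • 𝒢 v j = v i := by
  have hIic : ∑ j ∈ Iic i, gramSchmidtCoeff v i j • 𝒢 v j = ∑ j, gramSchmidtCoeff v i j • 𝒢 v j :=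
    sum_subset (subset_univ _) fun j _ hj ↦ by
      rw [isLowerTriangular_gramSchmidtCoeff v (show i < j by simpa using hj), zero_smul]
  rw [← hIic, ← Iio_insert, sum_insert (by simp), gramSchmidtCoeff_self, one_smul, eq_comm,
    ← sub_eq_iff_eq_add', sub_gramSchmidt_eq_sum]
  exact sum_congr rfl fun j hj ↦ by rw [gramSchmidtCoeff_of_ne v (mem_Iio.1 hj).ne']

theorem det_gram_eq_prod_norm_gramSchmidt_sq [Fintype ι] (v : ι → E) :
    (gram ℝ v).det = ∏ i, ‖𝒢 v i‖ ^ 2 := by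
  rw [gram_eq_mul_gram_mul_transpose (gramSchmidtCoeff v) (𝒢 v)
      fun i ↦ (sum_gramSchmidtCoeff_smul v i).symm,
    gram_eq_diagonal (gramSchmidt_pairwise_orthogonal ℝ v), det_mul, det_mul, det_transpose,
    det_gramSchmidtCoeff, det_diagonal, one_mul, mul_one]

end InnerProductSpace

theorem stmt_14 {E : Type*} [NormedAddCommGroup E] [InnerProductSpace ℝ E]
    (m : ℕ) (v : Fin m → E) (hnorm : ∀ i, ‖v i‖ ^ 2 = 4)
    (R : Finset (Fin m))
    (hR : ∀ i ∈ R, ∃ j : Fin m, j < i ∧ (inner ℝ (v j) (v i) : ℝ) = 1 / 2)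
    (G : Matrix (Fin m) (Fin m) ℝ)
    (hG : ∀ i j, G i j = inner ℝ (v i) (v j)) :
    G.det ≤ 4 ^ m * (63 / 64 : ℝ) ^ R.card := by
  have hgram : G = gram ℝ v := Matrix.ext hG
  have hbound : ∀ i, ‖gramSchmidt ℝ v i‖ ^ 2 ≤ 4 * if i ∈ R then 63 / 64 else 1 := by
    intro i
    split_ifs with hi
    · obtain ⟨j, hji, hinner⟩ := hR i hi
      have := inner_sq_le_mul_sub_norm_gramSchmidt_sq v hji
      rw [hinner, hnorm, hnorm] at this
      linarith
    · simpa [hnorm i] using norm_gramSchmidt_sq_le v i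
  calc G.det = ∏ i, ‖gramSchmidt ℝ v i‖ ^ 2 := by
        rw [hgram, det_gram_eq_prod_norm_gramSchmidt_sq]
    _ ≤ ∏ i, 4 * if i ∈ R then (63 / 64 : ℝ) else 1 :=
        prod_le_prod (fun _ _ ↦ sq_nonneg _) fun i _ ↦ hbound i
    _ = 4 ^ m * (63 / 64 : ℝ) ^ R.card := by
        rw [prod_mul_distrib, prod_ite_mem, univ_inter, prod_const, prod_const, card_univ,
          Fintype.card_fin]
end
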